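/- (Construction of ω^L from ω^H and Φ.) In the setting of a Lie group extension 1 → L → H →β K → 1, with S → M a principal H-bundle, R = S/L with connection ω^K, connection ω^H on S → M, and Higgs field Φ: S → Split(h,k): the l-valued one-form ω^L := ω^H − Φ(·)(π*ω^K) is an H-invariant connection on the principal L-bundle S → R. That is: (i) ω^L takes values in l; (ii) ω^L_s(ι^L_s(λ)) = λ for all λ ∈ l; (iii) R_h* ω^L = Ad(h⁻¹) ω^L for all h ∈ H. -/
import Mathlib


/-- Construction of `ω^L := ω^H − Φ(·)(π*ω^K)` from a connection `ω^H`
on the principal `H`-bundle `S → M` (projecting to `ω^K`) and a Higgs field `Φ`: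
`ω^L` is `l = ker β`-valued, reproduces fundamental vector fields of `l`, and is
`H`-invariant. -/
theorem omegaL_is_H_invariant_connection
    {H K hV kV S : Type*} [Group H] [Group K]
    [AddCommGroup hV] [Module ℝ hV] [AddCommGroup kV] [Module ℝ kV]
    {V : Type*} [AddCommGroup V] [Module ℝ V]
    (βG : H →* K) (hβGsurj : Function.Surjective βG)
    (β : hV →ₗ[ℝ] kV) (hβsurj : Function.Surjective β)
    (Ad : H →* (hV ≃ₗ[ℝ] hV)) (AdK : K →* (kV ≃ₗ[ℝ] kV))
    (hequiv : ∀ h : H, β ∘ₗ (Ad h).toLinearMap = (AdK (βG h)).toLinearMap ∘ₗ β)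
    (act : S → H → S)
    (hact_one : ∀ s, act s 1 = s)
    (hact_mul : ∀ s h₁ h₂, act (act s h₁) h₂ = act s (h₁ * h₂))
    (hfree : ∀ s h, act s h = s → h = 1)
    (D : H → S → (V →ₗ[ℝ] V))
    (hD1 : ∀ s, D 1 s = LinearMap.id)
    (hDmul : ∀ h₁ h₂ s, D (h₁ * h₂) s = D h₂ (act s h₁) ∘ₗ D h₁ s)
    (ι : S → (hV →ₗ[ℝ] V))
    (hιequiv : ∀ (h : H) (s : S) (η : hV),
      D h s (ι s η) = ι (act s h) (Ad h⁻¹ η))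
    -- the pullback `π*ω^K`
    (πωK : S → (V →ₗ[ℝ] kV))
    (hπωKfund : ∀ (s : S) (η : hV), πωK s (ι s η) = β η)
    (hπωKequiv : ∀ (h : H) (s : S),
      πωK (act s h) ∘ₗ D h s = (AdK (βG h)⁻¹).toLinearMap ∘ₗ πωK s)
    -- `ω^H`: a connection on `S → M` projecting to `ω^K`
    (ωH : S → (V →ₗ[ℝ] hV))
    (hωHfund : ∀ (s : S) (η : hV), ωH s (ι s η) = η)
    (hωHequiv : ∀ (h : H) (s : S),
      ωH (act s h) ∘ₗ D h s = (Ad h⁻¹).toLinearMap ∘ₗ ωH s)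
    (hωHproj : ∀ s, β ∘ₗ ωH s = πωK s)
    -- the Higgs field `Φ`
    (Φ : S → (kV →ₗ[ℝ] hV))
    (hΦsplit : ∀ s, β ∘ₗ Φ s = LinearMap.id)
    (hΦhiggs : ∀ s h, Φ (act s h)
      = (Ad h⁻¹).toLinearMap ∘ₗ Φ s ∘ₗ (AdK (βG h)).toLinearMap)
    -- `ω^L := ω^H − Φ(·)(π*ω^K)`
    (ωL : S → (V →ₗ[ℝ] hV))
    (hωL : ∀ s, ωL s = ωH s - Φ s ∘ₗ πωK s) :
    (∀ s v, ωL s v ∈ LinearMap.ker β) ∧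
    (∀ s, ∀ lam ∈ LinearMap.ker β, ωL s (ι s lam) = lam) ∧
    (∀ (h : H) (s : S),
      ωL (act s h) ∘ₗ D h s = (Ad h⁻¹).toLinearMap ∘ₗ ωL s) := by
  refine ⟨?_, ?_, ?_⟩
  · intro s v
    rw [LinearMap.mem_ker, hωL]
    have h1 := congrArg (fun f => f v) (hωHproj s)
    have h2 := congrArg (fun f => f (πωK s v)) (hΦsplit s)
    simp only [LinearMap.comp_apply, LinearMap.id_apply] at h1 h2
    simp [h1, h2]
  · intro s lam hlam
    rw [LinearMap.mem_ker] at hlam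
    rw [hωL]
    simp [hωHfund, hπωKfund, hlam]
  · intro h s
    ext v
    have h1 := congrArg (fun f => f v) (hωHequiv h s)
    have h2 := congrArg (fun f => f v) (hπωKequiv h s)
    simp only [LinearMap.comp_apply] at h1 h2
    simp only [hωL, hΦhiggs, LinearMap.comp_apply, LinearMap.sub_apply,
      LinearMap.coe_comp, Function.comp_apply, h1, h2, map_sub]
    have key : (AdK (βG h)) ((AdK (βG h)⁻¹) (πωK s v)) = πωK s v := by
      rw [map_inv]; exact (AdK (βG h)).apply_symm_apply _
    simp only [LinearEquiv.coe_coe]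
    rw [key]
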